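/- Let z : ℝ → ℝ² be differentiable on [t₀,t₁] with z'(t) = A·z(t) + B(t) for all t ∈ [t₀,t₁], where B : ℝ → ℝ² is continuous. If the first component of exp((t-s)A)·B(s) is ≤ 0 for all t₀ ≤ s ≤ t ≤ t₁, then for all t ∈ [t₀,t₁] the first component of z(t) is at most the first component of exp((t-t₀)A)·z(t₀). -/

import Mathlib

open Matrix Set

section aux

attribute [local instance] Matrix.linftyOpNormedRing Matrix.linftyOpNormedAlgebra

/-- Derivative of `s ↦ exp ((t - s) • A)`. -/
lemma hasDerivAt_exp_tsub_smul (A : Matrix (Fin 2) (Fin 2) ℝ) (t s : ℝ) :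
    HasDerivAt (fun s : ℝ => NormedSpace.exp ((t - s) • A))
      (-(NormedSpace.exp ((t - s) • A) * A)) s := by
  have h1 : HasDerivAt (fun u : ℝ => NormedSpace.exp (u • A))
      (NormedSpace.exp ((t - s) • A) * A) (t - s) :=
    hasDerivAt_exp_smul_const A (t - s)
  have h2 : HasDerivAt (fun s : ℝ => t - s) (-1) s := by
    simpa using (hasDerivAt_id s).const_sub t
  have := h1.scomp s h2
  simp only [neg_smul, one_smul] at this
  exact this

/-- Derivative of the `(0,j)`-entry of `s ↦ exp ((t - s) • A)`. -/
lemma hasDerivAt_exp_entry (A : Matrix (Fin 2) (Fin 2) ℝ) (t s : ℝ) (i j : Fin 2) :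
    HasDerivAt (fun s : ℝ => NormedSpace.exp ((t - s) • A) i j)
      ((-(NormedSpace.exp ((t - s) • A) * A)) i j) s := by
  let L : Matrix (Fin 2) (Fin 2) ℝ →ₗ[ℝ] ℝ :=
    { toFun := fun M => M i j
      map_add' := fun _ _ => rfl
      map_smul' := fun _ _ => rfl }
  have hL : HasFDerivAt (fun M : Matrix (Fin 2) (Fin 2) ℝ => M i j)
      (LinearMap.toContinuousLinearMap L) (NormedSpace.exp ((t - s) • A)) :=
    (LinearMap.toContinuousLinearMap L).hasFDerivAt
  exact hL.comp_hasDerivAt s (hasDerivAt_exp_tsub_smul A t s)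

end aux

/-- Derivative of the first component of `s ↦ exp ((t-s)•A) ⬝ z s`. -/
lemma hasDerivAt_first_component (A : Matrix ((Fin 2)) (Fin 2) ℝ) (t : ℝ)
    (z B : ℝ → (Fin 2 → ℝ)) (s : ℝ)
    (hz : HasDerivAt z (A.mulVec (z s) + B s) s) :
    HasDerivAt (fun s : ℝ => (NormedSpace.exp ((t - s) • A)).mulVec (z s) 0)
      ((NormedSpace.exp ((t - s) • A)).mulVec (B s) 0) s := by
  have hz0 : HasDerivAt (fun s => z s 0) ((A.mulVec (z s) + B s) 0) s :=
    (ContinuousLinearMap.proj (R := ℝ) (φ := fun _ : Fin 2 => ℝ) 0).hasFDerivAt.comp_hasDerivAt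
      s hz
  have hz1 : HasDerivAt (fun s => z s 1) ((A.mulVec (z s) + B s) 1) s :=
    (ContinuousLinearMap.proj (R := ℝ) (φ := fun _ : Fin 2 => ℝ) 1).hasFDerivAt.comp_hasDerivAt
      s hz
  have h00 := hasDerivAt_exp_entry A t s 0 0
  have h01 := hasDerivAt_exp_entry A t s 0 1
  have key := ((h00.mul hz0).add (h01.mul hz1))
  have heq : ∀ s' : ℝ, (NormedSpace.exp ((t - s') • A)).mulVec (z s') 0
      = NormedSpace.exp ((t - s') • A) 0 0 * z s' 0
        + NormedSpace.exp ((t - s') • A) 0 1 * z s' 1 := by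
    intro s'
    simp [Matrix.mulVec, dotProduct, Fin.sum_univ_two]
  rw [show ((NormedSpace.exp ((t - s) • A)).mulVec (B s) 0)
      = (-(NormedSpace.exp ((t - s) • A) * A)) 0 0 * z s 0
          + NormedSpace.exp ((t - s) • A) 0 0 * (A.mulVec (z s) + B s) 0
        + ((-(NormedSpace.exp ((t - s) • A) * A)) 0 1 * z s 1
          + NormedSpace.exp ((t - s) • A) 0 1 * (A.mulVec (z s) + B s) 1) from ?_]
  · exact (funext heq : _) ▸ key.congr_deriv rfl
  · have hm : (NormedSpace.exp ((t - s) • A) * A).mulVec (z s)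
        = (NormedSpace.exp ((t - s) • A)).mulVec (A.mulVec (z s)) :=
      (Matrix.mulVec_mulVec (z s) _ A).symm
    have e0 := congrFun hm 0
    simp only [Matrix.mulVec, dotProduct, Fin.sum_univ_two, Matrix.neg_apply,
      Pi.add_apply] at e0 ⊢
    ring_nf
    ring_nf at e0
    linarith

theorem variation_of_constants_first_component_bound
    (η ε₃ θ θm : ℝ) (hη : 0 < η) (hε₃ : 0 ≤ ε₃) (hθ : 0 < θ) (hθm : 0 < θm)
    (a : ℝ) (ha : a = 1 + ε₃ + η)
    (A : Matrix (Fin 2) (Fin 2) ℝ)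
    (hA : A = !![1 + ε₃ + θm / θ, -(a + θm / θ); θm / θ, -(η + θm / θ)])
    (t₀ t₁ : ℝ) (ht : t₀ < t₁)
    (z B : ℝ → (Fin 2 → ℝ))
    (hB : Continuous B)
    (hderiv : ∀ t ∈ Set.Icc t₀ t₁, HasDerivAt z (A.mulVec (z t) + B t) t)
    (hBneg : ∀ s t : ℝ, t₀ ≤ s → s ≤ t → t ≤ t₁ →
        (NormedSpace.exp ((t - s) • A)).mulVec (B s) 0 ≤ 0) :
    ∀ t ∈ Set.Icc t₀ t₁,
      z t 0 ≤ (NormedSpace.exp ((t - t₀) • A)).mulVec (z t₀) 0 := by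
  intro t htmem
  obtain ⟨ht₀, ht₁⟩ := htmem
  set f : ℝ → ℝ := fun s => (NormedSpace.exp ((t - s) • A)).mulVec (z s) 0 with hf
  have hfd : ∀ s ∈ Set.Icc t₀ t,
      HasDerivAt f ((NormedSpace.exp ((t - s) • A)).mulVec (B s) 0) s := by
    intro s hs
    exact hasDerivAt_first_component A t z B s
      (hderiv s ⟨hs.1, hs.2.trans ht₁⟩)
  have hanti : AntitoneOn f (Set.Icc t₀ t) := by
    apply antitoneOn_of_deriv_nonpos (convex_Icc t₀ t)
    · exact fun s hs => (hfd s hs).continuousAt.continuousWithinAt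
    · intro s hs
      rw [interior_Icc] at hs
      exact (hfd s ⟨le_of_lt hs.1, le_of_lt hs.2⟩).differentiableAt.differentiableWithinAt
    · intro s hs
      rw [interior_Icc] at hs
      rw [(hfd s ⟨le_of_lt hs.1, le_of_lt hs.2⟩).deriv]
      exact hBneg s t (le_of_lt hs.1) (le_of_lt hs.2) ht₁
  have h1 : f t ≤ f t₀ := hanti ⟨le_refl t₀, ht₀⟩ ⟨ht₀, le_refl t⟩ ht₀
  have hft : f t = z t 0 := by
    simp [hf, sub_self, zero_smul, NormedSpace.exp_zero, Matrix.one_mulVec]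
  rw [hft] at h1
  exact h1
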